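/- (Example 2, Case 1.) Let α > 0, β > 1, 0 < σ < 1 and γ < 0, and define G(s) = ∫₀^1 t^{α−1}(1−t)^{β−1}(1−σt)^{−γ} e^{−st} dt for s > 0. Then G is twice differentiable with G(s) > 0 and G′(s) < 0 on (0,∞), and for every s > 0: s · ( G′(s)/G(s) − 2·G″(s)/G′(s) ) ≤ α + 2. In particular, if α + 2 ≤ k then G′(s)/G(s) − 2G″(s)/G′(s) ≤ k/s for all s > 0. -/

import Mathlib

open Real MeasureTheory
open Set

noncomputable def ker (σ p q r s t : ℝ) : ℝ :=
  t ^ p * (1 - t) ^ q * (1 - σ * t) ^ r * Real.exp (-s * t)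

lemma ker_pos {σ p q r s t : ℝ} (hσ0 : 0 < σ) (hσ1 : σ < 1) (ht : t ∈ Ioo (0:ℝ) 1) :
    0 < ker σ p q r s t := by
  obtain ⟨h0, h1⟩ := ht
  have h2 : 0 < 1 - t := by linarith
  have h3 : 0 < 1 - σ * t := by nlinarith
  exact mul_pos (mul_pos (mul_pos (Real.rpow_pos_of_pos h0 _) (Real.rpow_pos_of_pos h2 _))
    (Real.rpow_pos_of_pos h3 _)) (Real.exp_pos _)

lemma ker_contOn {σ p q r s : ℝ} (hσ0 : 0 < σ) (hσ1 : σ < 1) :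
    ContinuousOn (ker σ p q r s) (Ioo 0 1) := by
  intro t ht
  obtain ⟨h0, h1⟩ := ht
  have h3 : (1 : ℝ) - σ * t ≠ 0 := by nlinarith
  apply ContinuousAt.continuousWithinAt
  refine ContinuousAt.mul (ContinuousAt.mul (ContinuousAt.mul ?_ ?_) ?_) ?_
  · exact Real.continuousAt_rpow_const t p (Or.inl (ne_of_gt h0))
  · exact ContinuousAt.rpow_const (by fun_prop) (Or.inl (by intro h; nlinarith [h]))
  · exact ContinuousAt.rpow_const (by fun_prop) (Or.inl (by intro h; nlinarith [h]))
  · exact (Real.continuous_exp.comp (by fun_prop)).continuousAt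

lemma rpow_bound {a x r : ℝ} (ha : 0 < a) (hax : a ≤ x) (hx1 : x ≤ 1) : x ^ r ≤ a ^ r + 1 := by
  rcases le_or_gt r 0 with hr | hr
  · have := Real.rpow_le_rpow_of_nonpos ha hax hr
    linarith
  · have h1 : x ^ r ≤ 1 := Real.rpow_le_one (by linarith) hx1 hr.le
    have h2 : (0:ℝ) ≤ a ^ r := Real.rpow_nonneg ha.le _
    linarith

lemma ker_meas {σ p q r s : ℝ} : Measurable (ker σ p q r s) := by
  unfold ker
  refine ((((measurable_id.pow measurable_const).mul
    ((measurable_const.sub measurable_id).pow measurable_const)).mul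
    ((measurable_const.sub (measurable_id.const_mul σ)).pow measurable_const)).mul
    (by simpa [neg_mul] using ((measurable_id.const_mul s).neg.exp)))

lemma base_integrable {p q : ℝ} (hp : -1 < p) (hq : -1 < q) :
    IntegrableOn (fun t : ℝ => t ^ p * (1 - t) ^ q) (Ioo 0 1) := by
  have meas : Measurable (fun t : ℝ => t ^ p * (1 - t) ^ q) :=
    (measurable_id.pow measurable_const).mul
      ((measurable_const.sub measurable_id).pow measurable_const)
  have h1 : IntegrableOn (fun t : ℝ => t ^ p * (1 - t) ^ q) (Ioc 0 2⁻¹) := by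
    have hint : IntegrableOn (fun t : ℝ => ((2:ℝ)⁻¹ ^ q + 1) * t ^ p) (Ioc 0 2⁻¹) := by
      refine Integrable.const_mul ?_ _
      exact (intervalIntegrable_iff_integrableOn_Ioc_of_le (by norm_num : (0:ℝ) ≤ 2⁻¹)).1
        (intervalIntegral.intervalIntegrable_rpow' hp)
    refine Integrable.mono hint (meas.aestronglyMeasurable) ?_
    refine (ae_restrict_iff' measurableSet_Ioc).2 (Filter.Eventually.of_forall ?_)
    intro t ht
    obtain ⟨h0, h2⟩ := ht
    have hb : (1:ℝ) - t ≤ 1 := by linarith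
    have hb2 : (2:ℝ)⁻¹ ≤ 1 - t := by linarith
    have hbnd : (1 - t) ^ q ≤ (2:ℝ)⁻¹ ^ q + 1 := rpow_bound (by norm_num) hb2 hb
    have htp : (0:ℝ) ≤ t ^ p := Real.rpow_nonneg h0.le _
    rw [Real.norm_eq_abs, Real.norm_eq_abs, abs_of_nonneg (mul_nonneg htp (Real.rpow_nonneg (by linarith) _)),
      abs_of_nonneg (by positivity)]
    calc t ^ p * (1 - t) ^ q ≤ t ^ p * ((2:ℝ)⁻¹ ^ q + 1) := by
          exact mul_le_mul_of_nonneg_left hbnd htp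
      _ = ((2:ℝ)⁻¹ ^ q + 1) * t ^ p := by ring
  have h2 : IntegrableOn (fun t : ℝ => t ^ p * (1 - t) ^ q) (Ico 2⁻¹ 1) := by
    have hint : IntegrableOn (fun t : ℝ => ((2:ℝ)⁻¹ ^ p + 1) * (1 - t) ^ q) (Ico 2⁻¹ 1) := by
      refine Integrable.const_mul ?_ _
      have : IntervalIntegrable (fun t : ℝ => (1 - t) ^ q) volume 0 1 := by
        have := (intervalIntegral.intervalIntegrable_rpow' (a := 0) (b := 1) hq).comp_sub_left 1
        simpa using this.symm
      have := (intervalIntegrable_iff_integrableOn_Ioc_of_le (by norm_num : (0:ℝ) ≤ 1)).1 this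
      exact this.mono_set (fun x hx => ⟨by linarith [hx.1], hx.2.le⟩)
    refine Integrable.mono hint (meas.aestronglyMeasurable) ?_
    refine (ae_restrict_iff' measurableSet_Ico).2 (Filter.Eventually.of_forall ?_)
    intro t ht
    obtain ⟨h0, h2⟩ := ht
    have hq0 : (0:ℝ) ≤ (1 - t) ^ q := Real.rpow_nonneg (by linarith) _
    have hbnd : t ^ p ≤ (2:ℝ)⁻¹ ^ p + 1 := rpow_bound (by norm_num) h0 h2.le
    rw [Real.norm_eq_abs, Real.norm_eq_abs,
      abs_of_nonneg (mul_nonneg (Real.rpow_nonneg (by linarith) _) hq0),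
      abs_of_nonneg (by positivity)]
    exact mul_le_mul_of_nonneg_right hbnd hq0
  exact (h1.union h2).mono_set (fun x hx => by
    rcases le_or_gt x 2⁻¹ with h | h
    · exact Or.inl ⟨hx.1, h⟩
    · exact Or.inr ⟨h.le, hx.2⟩)

lemma ker_integrableOn {σ p q r s : ℝ} (hσ0 : 0 < σ) (hσ1 : σ < 1)
    (hp : -1 < p) (hq : -1 < q) (hs : 0 ≤ s) :
    IntegrableOn (ker σ p q r s) (Ioo 0 1) := by
  have hbase := base_integrable hp hq
  refine Integrable.mono (hbase.const_mul ((1 - σ) ^ r + 1)) ker_meas.aestronglyMeasurable ?_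
  refine (ae_restrict_iff' measurableSet_Ioo).2 (Filter.Eventually.of_forall ?_)
  intro t ht
  obtain ⟨h0, h1⟩ := ht
  have h2 : (0:ℝ) < 1 - t := by linarith
  have h3 : (1:ℝ) - σ ≤ 1 - σ * t := by nlinarith
  have h4 : (1:ℝ) - σ * t ≤ 1 := by nlinarith
  have hσr : (1 - σ * t) ^ r ≤ (1 - σ) ^ r + 1 := rpow_bound (by linarith) h3 h4
  have hexp : Real.exp (-s * t) ≤ 1 := by
    rw [Real.exp_le_one_iff]; nlinarith
  have hk := (ker_pos (p := p) (q := q) (r := r) (s := s) hσ0 hσ1 ⟨h0, h1⟩).le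
  have e1 : (0:ℝ) ≤ t ^ p * (1-t) ^ q :=
    mul_nonneg (Real.rpow_nonneg h0.le _) (Real.rpow_nonneg h2.le _)
  have e2 : (0:ℝ) ≤ (1 - σ) ^ r + 1 := by
    have := Real.rpow_nonneg (x := 1 - σ) (by linarith) r; linarith
  rw [Real.norm_eq_abs, Real.norm_eq_abs, abs_of_nonneg hk, abs_of_nonneg (mul_nonneg e2 e1)]
  unfold ker
  calc t ^ p * (1 - t) ^ q * (1 - σ * t) ^ r * Real.exp (-s * t)
      ≤ t ^ p * (1 - t) ^ q * (1 - σ * t) ^ r * 1 := by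
        have : (0:ℝ) ≤ t ^ p * (1 - t) ^ q * (1 - σ * t) ^ r :=
          mul_nonneg e1 (Real.rpow_nonneg (by linarith) _)
        exact mul_le_mul_of_nonneg_left hexp this
    _ = (1 - σ * t) ^ r * (t ^ p * (1 - t) ^ q) := by ring
    _ ≤ ((1 - σ) ^ r + 1) * (t ^ p * (1 - t) ^ q) := mul_le_mul_of_nonneg_right hσr e1

lemma ker_integral_pos {σ p q r s : ℝ} (hσ0 : 0 < σ) (hσ1 : σ < 1)
    (hp : -1 < p) (hq : -1 < q) (hs : 0 ≤ s) :
    0 < ∫ t in Ioo (0:ℝ) 1, ker σ p q r s t := by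
  have hint := ker_integrableOn (σ := σ) (p := p) (q := q) (r := r) (s := s) hσ0 hσ1 hp hq hs
  have hioc : IntegrableOn (ker σ p q r s) (Ioc 0 1) :=
    hint.congr_set_ae (Ioo_ae_eq_Ioc (a := (0:ℝ)) (b := 1)).symm
  rw [← MeasureTheory.integral_Ioc_eq_integral_Ioo,
    ← intervalIntegral.integral_of_le (zero_le_one)]
  apply intervalIntegral.intervalIntegral_pos_of_pos_on
  · rw [intervalIntegrable_iff_integrableOn_Ioc_of_le zero_le_one]
    exact hioc
  · exact fun x hx => ker_pos hσ0 hσ1 hx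
  · exact zero_lt_one

lemma ker_integral_nonneg {σ p q r s : ℝ} (hσ0 : 0 < σ) (hσ1 : σ < 1) :
    0 ≤ ∫ t in Ioo (0:ℝ) 1, ker σ p q r s t := by
  apply MeasureTheory.setIntegral_nonneg measurableSet_Ioo
  exact fun x hx => (ker_pos hσ0 hσ1 hx).le

lemma ker_succ {σ p q r s t : ℝ} (ht : 0 < t) :
    ker σ (p + 1) q r s t = t * ker σ p q r s t := by
  unfold ker
  rw [Real.rpow_add ht, Real.rpow_one]
  ring

lemma ker_hasDerivAt {σ p q r s : ℝ} (hσ0 : 0 < σ) (hσ1 : σ < 1) (hp : -1 < p) (hq : -1 < q)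
    (hs : 0 < s) :
    HasDerivAt (fun x => ∫ t in Ioo (0:ℝ) 1, ker σ p q r x t)
      (-∫ t in Ioo (0:ℝ) 1, ker σ (p + 1) q r s t) s := by
  have key := hasDerivAt_integral_of_dominated_loc_of_deriv_le
    (F := fun x t => ker σ p q r x t)
    (F' := fun x t => -ker σ (p + 1) q r x t)
    (bound := fun t => ker σ (p + 1) q r 0 t)
    (μ := volume.restrict (Ioo 0 1)) (x₀ := s) (s := Metric.ball s (s / 2))
    (Metric.ball_mem_nhds s (by positivity))
    (Filter.Eventually.of_forall fun x => ker_meas.aestronglyMeasurable)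
    ((ker_integrableOn hσ0 hσ1 hp hq hs.le))
    (ker_meas.neg.aestronglyMeasurable)
    ?_ (ker_integrableOn hσ0 hσ1 (by linarith) hq le_rfl) ?_
  · rw [MeasureTheory.integral_neg] at key
    exact key.2
  · refine (ae_restrict_iff' measurableSet_Ioo).2 (Filter.Eventually.of_forall ?_)
    intro t ht x hx
    have hx0 : 0 < x := by
      have := abs_lt.1 (by simpa [Real.dist_eq] using hx)
      linarith [this.1]
    rw [norm_neg, Real.norm_eq_abs, abs_of_nonneg (ker_pos hσ0 hσ1 ht).le]
    unfold ker
    have hmul : Real.exp (-x * t) ≤ Real.exp (-(0:ℝ) * t) := by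
      apply Real.exp_le_exp.2
      nlinarith [ht.1]
    have hnn : (0:ℝ) ≤ t ^ (p+1) * (1 - t) ^ q * (1 - σ * t) ^ r :=
      mul_nonneg (mul_nonneg (Real.rpow_nonneg ht.1.le _)
        (Real.rpow_nonneg (by linarith [ht.2]) _))
        (Real.rpow_nonneg (by nlinarith [ht.1, ht.2] : (0:ℝ) ≤ 1 - σ * t) _)
    exact mul_le_mul_of_nonneg_left hmul hnn
  · refine (ae_restrict_iff' measurableSet_Ioo).2 (Filter.Eventually.of_forall ?_)
    intro t ht x _
    have h1 : HasDerivAt (fun x : ℝ => Real.exp (-x * t)) (-t * Real.exp (-x * t)) x := by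
      have h0 : HasDerivAt (fun x : ℝ => -x * t) (-t) x := by
        simpa using ((hasDerivAt_id x).neg.mul_const t)
      simpa [mul_comm] using h0.exp
    have h2 := h1.const_mul (t ^ p * (1 - t) ^ q * (1 - σ * t) ^ r)
    have e : ∀ y : ℝ, t ^ p * (1 - t) ^ q * (1 - σ * t) ^ r * Real.exp (-y * t)
        = ker σ p q r y t := fun y => rfl
    have goal_eq : t ^ p * (1 - t) ^ q * (1 - σ * t) ^ r * (-t * Real.exp (-x * t))
        = -ker σ (p + 1) q r x t := by
      rw [ker_succ ht.1]
      unfold ker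
      ring
    have : HasDerivAt (fun y => ker σ p q r y t)
        (t ^ p * (1 - t) ^ q * (1 - σ * t) ^ r * (-t * Real.exp (-x * t))) x := by
      unfold ker; convert h2 using 2 <;> ring
    rw [goal_eq] at this
    exact this

lemma ker_cont_Icc {σ β γ c s : ℝ} (hσ0 : 0 < σ) (hσ1 : σ < 1) (hβ : 1 < β) (hc : 0 < c) :
    ContinuousOn (ker σ c (β-1) (-γ) s) (Icc 0 1) := by
  intro t ht
  apply ContinuousAt.continuousWithinAt
  have h3 : (1:ℝ) - σ * t ≠ 0 := by nlinarith [ht.1, ht.2]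
  refine ContinuousAt.mul (ContinuousAt.mul (ContinuousAt.mul ?_ ?_) ?_) ?_
  · exact Real.continuousAt_rpow_const t c (Or.inr hc.le)
  · exact ContinuousAt.rpow_const (by fun_prop) (Or.inr (by linarith))
  · exact ContinuousAt.rpow_const (by fun_prop) (Or.inl h3)
  · exact (Real.continuous_exp.comp (by fun_prop)).continuousAt

lemma ker_deriv_t {σ β γ c s : ℝ} (hσ0 : 0 < σ) (hσ1 : σ < 1) (hβ : 1 < β)
    {t : ℝ} (ht : t ∈ Ioo (0:ℝ) 1) :
    HasDerivAt (ker σ c (β-1) (-γ) s)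
      (c * ker σ (c-1) (β-1) (-γ) s t - (β-1) * ker σ c (β-2) (-γ) s t
        - (-γ*σ) * ker σ c (β-1) (-γ-1) s t - s * ker σ c (β-1) (-γ) s t) t := by
  obtain ⟨h0, h1⟩ := ht
  have h2 : (0:ℝ) < 1 - t := by linarith
  have h3 : (0:ℝ) < 1 - σ * t := by nlinarith
  have hf1 : HasDerivAt (fun x : ℝ => x ^ c) (c * t ^ (c-1)) t :=
    Real.hasDerivAt_rpow_const (Or.inl h0.ne')
  have hf2 : HasDerivAt (fun x : ℝ => (1 - x) ^ (β-1))
      ((β-1) * (1 - t) ^ (β-1-1) * (-1)) t := by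
    have hin : HasDerivAt (fun x : ℝ => 1 - x) (-1) t := by
      simpa using (hasDerivAt_id t).const_sub 1
    exact (Real.hasDerivAt_rpow_const (x := 1 - t) (p := β - 1) (Or.inl h2.ne')).comp t hin
  have hf3 : HasDerivAt (fun x : ℝ => (1 - σ * x) ^ (-γ))
      ((-γ) * (1 - σ * t) ^ (-γ-1) * (-σ)) t := by
    have hin : HasDerivAt (fun x : ℝ => 1 - σ * x) (-σ) t := by
      simpa using ((hasDerivAt_id t).const_mul σ).const_sub 1
    exact (Real.hasDerivAt_rpow_const (x := 1 - σ * t) (p := -γ) (Or.inl h3.ne')).comp t hin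
  have hf4 : HasDerivAt (fun x : ℝ => Real.exp (-s * x)) (-s * Real.exp (-s * t)) t := by
    have hin : HasDerivAt (fun x : ℝ => -s * x) (-s) t := by
      simpa using (hasDerivAt_id t).const_mul (-s)
    simpa [mul_comm] using hin.exp
  have H := ((hf1.mul hf2).mul hf3).mul hf4
  have e1 : β - 1 - 1 = β - 2 := by ring
  rw [e1] at H
  refine H.congr_deriv ?_
  unfold ker
  simp only [Pi.mul_apply]
  ring

lemma ker_ibp {σ β γ c s : ℝ} (hσ0 : 0 < σ) (hσ1 : σ < 1) (hβ : 1 < β) (hγ : γ < 0)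
    (hc : 0 < c) (hs : 0 < s) :
    s * ∫ t in Ioo (0:ℝ) 1, ker σ c (β-1) (-γ) s t =
      c * (∫ t in Ioo (0:ℝ) 1, ker σ (c-1) (β-1) (-γ) s t)
      - (β-1) * (∫ t in Ioo (0:ℝ) 1, ker σ c (β-2) (-γ) s t)
      - (-γ*σ) * (∫ t in Ioo (0:ℝ) 1, ker σ c (β-1) (-γ-1) s t) := by
  have k1 : IntegrableOn (ker σ (c-1) (β-1) (-γ) s) (Ioo 0 1) :=
    ker_integrableOn hσ0 hσ1 (by linarith) (by linarith) hs.le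
  have k2 : IntegrableOn (ker σ c (β-2) (-γ) s) (Ioo 0 1) :=
    ker_integrableOn hσ0 hσ1 (by linarith) (by linarith) hs.le
  have k3 : IntegrableOn (ker σ c (β-1) (-γ-1) s) (Ioo 0 1) :=
    ker_integrableOn hσ0 hσ1 (by linarith) (by linarith) hs.le
  have k0 : IntegrableOn (ker σ c (β-1) (-γ) s) (Ioo 0 1) :=
    ker_integrableOn hσ0 hσ1 (by linarith) (by linarith) hs.le
  set Φ' : ℝ → ℝ := fun t =>
    c * ker σ (c-1) (β-1) (-γ) s t - (β-1) * ker σ c (β-2) (-γ) s t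
      - (-γ*σ) * ker σ c (β-1) (-γ-1) s t - s * ker σ c (β-1) (-γ) s t with hΦ'
  have hΦ'int : IntegrableOn Φ' (Ioo 0 1) :=
    (((k1.const_mul c).sub (k2.const_mul (β-1))).sub (k3.const_mul (-γ*σ))).sub
      (k0.const_mul s)
  have hIoc : IntegrableOn Φ' (Ioc 0 1) :=
    hΦ'int.congr_set_ae (Ioo_ae_eq_Ioc (a := (0:ℝ)) (b := 1)).symm
  have hFTC : (∫ y in (0:ℝ)..1, Φ' y) = ker σ c (β-1) (-γ) s 1 - ker σ c (β-1) (-γ) s 0 := by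
    apply intervalIntegral.integral_eq_sub_of_hasDeriv_right_of_le zero_le_one
      (ker_cont_Icc hσ0 hσ1 hβ hc)
      (fun x hx => (ker_deriv_t hσ0 hσ1 hβ hx).hasDerivWithinAt)
    rw [intervalIntegrable_iff_integrableOn_Ioc_of_le zero_le_one]
    exact hIoc
  have hend1 : ker σ c (β-1) (-γ) s 1 = 0 := by
    have : ((1:ℝ) - 1) ^ (β-1) = 0 := by
      rw [sub_self]; exact Real.zero_rpow (by linarith)
    unfold ker; rw [this]; ring
  have hend0 : ker σ c (β-1) (-γ) s 0 = 0 := by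
    have : (0:ℝ) ^ c = 0 := Real.zero_rpow hc.ne'
    unfold ker; rw [this]; ring
  rw [hend1, hend0, sub_self, intervalIntegral.integral_of_le zero_le_one,
    MeasureTheory.integral_Ioc_eq_integral_Ioo] at hFTC
  have hsplit : (∫ t in Ioo (0:ℝ) 1, Φ' t) =
      c * (∫ t in Ioo (0:ℝ) 1, ker σ (c-1) (β-1) (-γ) s t)
      - (β-1) * (∫ t in Ioo (0:ℝ) 1, ker σ c (β-2) (-γ) s t)
      - (-γ*σ) * (∫ t in Ioo (0:ℝ) 1, ker σ c (β-1) (-γ-1) s t)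
      - s * (∫ t in Ioo (0:ℝ) 1, ker σ c (β-1) (-γ) s t) := by
    have i1 : Integrable (fun t => c * ker σ (c-1) (β-1) (-γ) s t)
        (volume.restrict (Ioo 0 1)) := k1.const_mul c
    have i2 : Integrable (fun t => (β-1) * ker σ c (β-2) (-γ) s t)
        (volume.restrict (Ioo 0 1)) := k2.const_mul (β-1)
    have i3 : Integrable (fun t => (-γ*σ) * ker σ c (β-1) (-γ-1) s t)
        (volume.restrict (Ioo 0 1)) := k3.const_mul (-γ*σ)
    have i0 : Integrable (fun t => s * ker σ c (β-1) (-γ) s t)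
        (volume.restrict (Ioo 0 1)) := k0.const_mul s
    have i12 : Integrable (fun t => c * ker σ (c-1) (β-1) (-γ) s t
        - (β-1) * ker σ c (β-2) (-γ) s t) (volume.restrict (Ioo 0 1)) := i1.sub i2
    have i123 : Integrable (fun t => c * ker σ (c-1) (β-1) (-γ) s t
        - (β-1) * ker σ c (β-2) (-γ) s t - (-γ*σ) * ker σ c (β-1) (-γ-1) s t)
        (volume.restrict (Ioo 0 1)) := i12.sub i3
    rw [hΦ']
    rw [MeasureTheory.integral_sub i123 i0, MeasureTheory.integral_sub i12 i3,
      MeasureTheory.integral_sub i1 i2,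
      MeasureTheory.integral_const_mul, MeasureTheory.integral_const_mul,
      MeasureTheory.integral_const_mul, MeasureTheory.integral_const_mul]
  rw [hsplit] at hFTC
  linarith

lemma correlation {u φ : ℝ → ℝ}
    (hu : IntegrableOn u (Ioo 0 1))
    (htu : IntegrableOn (fun t => t * u t) (Ioo 0 1))
    (hg : IntegrableOn (fun t => φ t * u t) (Ioo 0 1))
    (htg : IntegrableOn (fun t => t * (φ t * u t)) (Ioo 0 1))
    (hupos : ∀ t ∈ Ioo (0:ℝ) 1, 0 ≤ u t)
    (hφpos : ∀ t ∈ Ioo (0:ℝ) 1, 0 ≤ φ t)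
    (hφmono : ∀ x ∈ Ioo (0:ℝ) 1, ∀ y ∈ Ioo (0:ℝ) 1, x ≤ y → φ x ≤ φ y) :
    (∫ t in Ioo (0:ℝ) 1, φ t * u t) * (∫ t in Ioo (0:ℝ) 1, t * u t) ≤
    2 * ((∫ t in Ioo (0:ℝ) 1, t * (φ t * u t)) * (∫ t in Ioo (0:ℝ) 1, u t)) := by
  set M0 := ∫ t in Ioo (0:ℝ) 1, u t with hM0
  set M1 := ∫ t in Ioo (0:ℝ) 1, t * u t with hM1
  set D := ∫ t in Ioo (0:ℝ) 1, t * (φ t * u t) with hD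
  have step1 : ∀ x ∈ Ioo (0:ℝ) 1, (φ x * u x) * M1 ≤ (x * (φ x * u x)) * M0 + u x * D := by
    intro x hx
    have key : ∀ y ∈ Ioo (0:ℝ) 1,
        (φ x * u x) * (y * u y) ≤ (x * (φ x * u x)) * u y + u x * (y * (φ y * u y)) := by
      intro y hy
      have hux := hupos x hx
      have huy := hupos y hy
      have hφx := hφpos x hx
      have hφy := hφpos y hy
      have hscalar : φ x * y ≤ x * φ x + y * φ y := by
        rcases le_total y x with h | h
        · nlinarith [hφmono y hy x hx h, hy.1.le]
        · nlinarith [hφmono x hx y hy h, hy.1.le, hx.1.le]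
      nlinarith [mul_nonneg hux huy, mul_le_mul_of_nonneg_right hscalar (mul_nonneg hux huy)]
    have hlhs : (φ x * u x) * M1 = ∫ y in Ioo (0:ℝ) 1, (φ x * u x) * (y * u y) := by
      rw [hM1, ← MeasureTheory.integral_const_mul]
    have hrhs : (x * (φ x * u x)) * M0 + u x * D =
        ∫ y in Ioo (0:ℝ) 1, ((x * (φ x * u x)) * u y + u x * (y * (φ y * u y))) := by
      have ia : Integrable (fun y => (x * (φ x * u x)) * u y) (volume.restrict (Ioo 0 1)) :=
        hu.const_mul _
      have ib : Integrable (fun y => u x * (y * (φ y * u y)))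
          (volume.restrict (Ioo 0 1)) := htg.const_mul _
      rw [MeasureTheory.integral_add ia ib, MeasureTheory.integral_const_mul,
        MeasureTheory.integral_const_mul, hM0, hD]
    rw [hlhs, hrhs]
    apply MeasureTheory.setIntegral_mono_on (htu.const_mul _) _ measurableSet_Ioo key
    exact (hu.const_mul _).add (htg.const_mul _)
  have step2 : (∫ x in Ioo (0:ℝ) 1, (φ x * u x) * M1) ≤
      ∫ x in Ioo (0:ℝ) 1, ((x * (φ x * u x)) * M0 + u x * D) := by
    apply MeasureTheory.setIntegral_mono_on (hg.mul_const _) _ measurableSet_Ioo step1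
    exact (htg.mul_const _).add (hu.mul_const _)
  rw [MeasureTheory.integral_mul_const] at step2
  have : (∫ x in Ioo (0:ℝ) 1, ((x * (φ x * u x)) * M0 + u x * D)) = D * M0 + M0 * D := by
    rw [MeasureTheory.integral_add ((htg.mul_const _)) ((hu.mul_const _)),
      MeasureTheory.integral_mul_const, MeasureTheory.integral_mul_const, hD, hM0]
  rw [this] at step2
  linarith

lemma decomp {σ β γ a s t : ℝ} (hσ0 : 0 < σ) (hσ1 : σ < 1) (ht : t ∈ Ioo (0:ℝ) 1) :
    (β-1) * ker σ a (β-2) (-γ) s t + (-γ*σ) * ker σ a (β-1) (-γ-1) s t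
    = (t * ((β-1)/(1-t) + (-γ*σ)/(1-σ*t))) * ker σ (a-1) (β-1) (-γ) s t := by
  obtain ⟨h0, h1⟩ := ht
  have h2 : (0:ℝ) < 1 - t := by linarith
  have h3 : (0:ℝ) < 1 - σ * t := by nlinarith
  have e1 : t ^ a = t ^ (a-1) * t := by
    nth_rewrite 1 [show a = (a-1)+1 by ring]
    rw [Real.rpow_add_one h0.ne']
  have e2 : (1-t) ^ (β-2) = (1-t) ^ (β-1) / (1-t) := by
    rw [show β-2 = (β-1)-1 by ring, Real.rpow_sub h2, Real.rpow_one]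
  have e3 : (1-σ*t) ^ (-γ-1) = (1-σ*t) ^ (-γ) / (1-σ*t) := by
    rw [Real.rpow_sub h3, Real.rpow_one]
  unfold ker
  rw [e1, e2, e3]
  field_simp


theorem stmt18 (α β σ γ : ℝ) (hα : 0 < α) (hβ : 1 < β)
    (hσ0 : 0 < σ) (hσ1 : σ < 1) (hγ : γ < 0)
    (G : ℝ → ℝ)
    (hG : ∀ s : ℝ, G s = ∫ t in Set.Ioo (0 : ℝ) 1,
      t ^ (α - 1) * (1 - t) ^ (β - 1) * (1 - σ * t) ^ (-γ) * Real.exp (-s * t)) :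
    (∀ s > (0 : ℝ), DifferentiableAt ℝ G s ∧ DifferentiableAt ℝ (deriv G) s) ∧
    (∀ s > (0 : ℝ), 0 < G s ∧ deriv G s < 0) ∧
    (∀ s > (0 : ℝ),
      s * (deriv G s / G s - 2 * deriv (deriv G) s / deriv G s) ≤ α + 2) ∧
    (∀ k : ℕ, α + 2 ≤ k → ∀ s > (0 : ℝ),
      deriv G s / G s - 2 * deriv (deriv G) s / deriv G s ≤ k / s) := by
  have hγσ : (0:ℝ) < -γ * σ := by nlinarith
  have hp0 : (-1:ℝ) < α - 1 := by linarith
  have hq0 : (-1:ℝ) < β - 1 := by linarith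
  have hGeq : G = fun s => ∫ t in Set.Ioo (0:ℝ) 1, ker σ (α-1) (β-1) (-γ) s t := by
    funext s; rw [hG s]; rfl
  have hder1 : ∀ s : ℝ, 0 < s →
      HasDerivAt G (-(∫ t in Set.Ioo (0:ℝ) 1, ker σ α (β-1) (-γ) s t)) s := by
    intro s hs
    have h := ker_hasDerivAt (σ := σ) (p := α-1) (q := β-1) (r := -γ) hσ0 hσ1 hp0 hq0 hs
    rw [show α - 1 + 1 = α by ring] at h
    rw [hGeq]; exact h
  have hder2 : ∀ s : ℝ, 0 < s →
      HasDerivAt (fun x => ∫ t in Set.Ioo (0:ℝ) 1, ker σ α (β-1) (-γ) x t)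
        (-(∫ t in Set.Ioo (0:ℝ) 1, ker σ (α+1) (β-1) (-γ) s t)) s := by
    intro s hs
    exact ker_hasDerivAt (σ := σ) (p := α) (q := β-1) (r := -γ) hσ0 hσ1 (by linarith) hq0 hs
  have hderivG : ∀ s : ℝ, 0 < s →
      deriv G s = -(∫ t in Set.Ioo (0:ℝ) 1, ker σ α (β-1) (-γ) s t) :=
    fun s hs => (hder1 s hs).deriv
  have hderiv2G : ∀ s : ℝ, 0 < s →
      deriv (deriv G) s = ∫ t in Set.Ioo (0:ℝ) 1, ker σ (α+1) (β-1) (-γ) s t := by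
    intro s hs
    have hev : deriv G =ᶠ[nhds s]
        fun x => -(∫ t in Set.Ioo (0:ℝ) 1, ker σ α (β-1) (-γ) x t) := by
      filter_upwards [Ioi_mem_nhds hs] with x hx using hderivG x hx
    rw [hev.deriv_eq, (hder2 s hs).fun_neg.deriv, neg_neg]
  have hGpos : ∀ s : ℝ, 0 < s → 0 < G s := by
    intro s hs
    rw [hG s]
    exact ker_integral_pos hσ0 hσ1 hp0 hq0 hs.le
  have hM1pos : ∀ s : ℝ, 0 < s →
      0 < ∫ t in Set.Ioo (0:ℝ) 1, ker σ α (β-1) (-γ) s t :=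
    fun s hs => ker_integral_pos hσ0 hσ1 (by linarith) hq0 hs.le
  have hM2pos : ∀ s : ℝ, 0 < s →
      0 < ∫ t in Set.Ioo (0:ℝ) 1, ker σ (α+1) (β-1) (-γ) s t :=
    fun s hs => ker_integral_pos hσ0 hσ1 (by linarith) hq0 hs.le
  -- the key inequality
  have key : ∀ s : ℝ, 0 < s →
      s * (deriv G s / G s - 2 * deriv (deriv G) s / deriv G s) ≤ α + 2 := by
    intro s hs
    have ku : IntegrableOn (ker σ (α-1) (β-1) (-γ) s) (Set.Ioo 0 1) :=
      ker_integrableOn hσ0 hσ1 hp0 hq0 hs.le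
    have ktu : IntegrableOn (ker σ α (β-1) (-γ) s) (Set.Ioo 0 1) :=
      ker_integrableOn hσ0 hσ1 (by linarith) hq0 hs.le
    have kA1 : IntegrableOn (ker σ α (β-2) (-γ) s) (Set.Ioo 0 1) :=
      ker_integrableOn hσ0 hσ1 (by linarith) (by linarith) hs.le
    have kB1 : IntegrableOn (ker σ α (β-1) (-γ-1) s) (Set.Ioo 0 1) :=
      ker_integrableOn hσ0 hσ1 (by linarith) hq0 hs.le
    have kA2 : IntegrableOn (ker σ (α+1) (β-2) (-γ) s) (Set.Ioo 0 1) :=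
      ker_integrableOn hσ0 hσ1 (by linarith) (by linarith) hs.le
    have kB2 : IntegrableOn (ker σ (α+1) (β-1) (-γ-1) s) (Set.Ioo 0 1) :=
      ker_integrableOn hσ0 hσ1 (by linarith) hq0 hs.le
    set φ : ℝ → ℝ := fun t => t * ((β-1)/(1-t) + (-γ*σ)/(1-σ*t)) with hφ
    have pt1 : ∀ t ∈ Set.Ioo (0:ℝ) 1,
        ker σ α (β-1) (-γ) s t = t * ker σ (α-1) (β-1) (-γ) s t := by
      intro t ht
      have h := ker_succ (σ := σ) (p := α-1) (q := β-1) (r := -γ) (s := s) ht.1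
      rwa [show α - 1 + 1 = α by ring] at h
    have ptφ : ∀ t ∈ Set.Ioo (0:ℝ) 1,
        (β-1) * ker σ α (β-2) (-γ) s t + (-γ*σ) * ker σ α (β-1) (-γ-1) s t
          = φ t * ker σ (α-1) (β-1) (-γ) s t := by
      intro t ht
      rw [hφ]
      exact decomp hσ0 hσ1 ht
    have ptφ2 : ∀ t ∈ Set.Ioo (0:ℝ) 1,
        (β-1) * ker σ (α+1) (β-2) (-γ) s t + (-γ*σ) * ker σ (α+1) (β-1) (-γ-1) s t
          = t * (φ t * ker σ (α-1) (β-1) (-γ) s t) := by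
      intro t ht
      rw [ker_succ (σ := σ) (p := α) (q := β-2) (r := -γ) (s := s) ht.1,
        ker_succ (σ := σ) (p := α) (q := β-1) (r := -γ-1) (s := s) ht.1,
        ← ptφ t ht]
      ring
    -- integrability of φ·u and t·φ·u
    have hsum1 : IntegrableOn (fun t => (β-1) * ker σ α (β-2) (-γ) s t
        + (-γ*σ) * ker σ α (β-1) (-γ-1) s t) (Set.Ioo 0 1) :=
      (kA1.const_mul (β-1)).add (kB1.const_mul (-γ*σ))
    have hsum2 : IntegrableOn (fun t => (β-1) * ker σ (α+1) (β-2) (-γ) s t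
        + (-γ*σ) * ker σ (α+1) (β-1) (-γ-1) s t) (Set.Ioo 0 1) :=
      (kA2.const_mul (β-1)).add (kB2.const_mul (-γ*σ))
    have hgint : IntegrableOn (fun t => φ t * ker σ (α-1) (β-1) (-γ) s t) (Set.Ioo 0 1) :=
      hsum1.congr_fun (fun t ht => ptφ t ht) measurableSet_Ioo
    have htgint : IntegrableOn (fun t => t * (φ t * ker σ (α-1) (β-1) (-γ) s t))
        (Set.Ioo 0 1) :=
      hsum2.congr_fun (fun t ht => ptφ2 t ht) measurableSet_Ioo
    have htu : IntegrableOn (fun t => t * ker σ (α-1) (β-1) (-γ) s t) (Set.Ioo 0 1) :=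
      ktu.congr_fun (fun t ht => pt1 t ht) measurableSet_Ioo
    -- positivity and monotonicity of φ
    have hφpos : ∀ t ∈ Set.Ioo (0:ℝ) 1, 0 ≤ φ t := by
      intro t ht
      have h2 : (0:ℝ) < 1 - t := by linarith [ht.2]
      have h3 : (0:ℝ) < 1 - σ * t := by nlinarith [ht.1, ht.2]
      have : (0:ℝ) ≤ (β-1)/(1-t) + (-γ*σ)/(1-σ*t) :=
        add_nonneg (div_nonneg (by linarith) h2.le) (div_nonneg hγσ.le h3.le)
      exact mul_nonneg ht.1.le this
    have hφmono : ∀ x ∈ Set.Ioo (0:ℝ) 1, ∀ y ∈ Set.Ioo (0:ℝ) 1, x ≤ y → φ x ≤ φ y := by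
      intro x hx y hy hxy
      have h2x : (0:ℝ) < 1 - x := by linarith [hx.2]
      have h2y : (0:ℝ) < 1 - y := by linarith [hy.2]
      have h3x : (0:ℝ) < 1 - σ * x := by nlinarith [hx.1, hx.2]
      have h3y : (0:ℝ) < 1 - σ * y := by nlinarith [hy.1, hy.2]
      have hψ : (β-1)/(1-x) + (-γ*σ)/(1-σ*x) ≤ (β-1)/(1-y) + (-γ*σ)/(1-σ*y) := by
        gcongr <;> linarith [mul_le_mul_of_nonneg_left hxy hσ0.le]
      have hψx : (0:ℝ) ≤ (β-1)/(1-x) + (-γ*σ)/(1-σ*x) :=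
        add_nonneg (div_nonneg (by linarith) h2x.le) (div_nonneg hγσ.le h3x.le)
      exact mul_le_mul hxy hψ hψx (by linarith [hy.1])
    have hcorr := correlation ku htu hgint htgint
      (fun t ht => (ker_pos hσ0 hσ1 ht).le) hφpos hφmono
    -- rewrite the integrals in hcorr
    have ICeq : (∫ t in Set.Ioo (0:ℝ) 1, φ t * ker σ (α-1) (β-1) (-γ) s t)
        = (β-1) * (∫ t in Set.Ioo (0:ℝ) 1, ker σ α (β-2) (-γ) s t)
          + (-γ*σ) * (∫ t in Set.Ioo (0:ℝ) 1, ker σ α (β-1) (-γ-1) s t) := by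
      rw [← MeasureTheory.integral_const_mul, ← MeasureTheory.integral_const_mul,
        ← MeasureTheory.integral_add (kA1.const_mul (β-1)) (kB1.const_mul (-γ*σ))]
      exact (MeasureTheory.setIntegral_congr_fun measurableSet_Ioo
        (fun t ht => ptφ t ht)).symm
    have IDeq : (∫ t in Set.Ioo (0:ℝ) 1, t * (φ t * ker σ (α-1) (β-1) (-γ) s t))
        = (β-1) * (∫ t in Set.Ioo (0:ℝ) 1, ker σ (α+1) (β-2) (-γ) s t)
          + (-γ*σ) * (∫ t in Set.Ioo (0:ℝ) 1, ker σ (α+1) (β-1) (-γ-1) s t) := by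
      rw [← MeasureTheory.integral_const_mul, ← MeasureTheory.integral_const_mul,
        ← MeasureTheory.integral_add (kA2.const_mul (β-1)) (kB2.const_mul (-γ*σ))]
      exact (MeasureTheory.setIntegral_congr_fun measurableSet_Ioo
        (fun t ht => ptφ2 t ht)).symm
    have IM1eq : (∫ t in Set.Ioo (0:ℝ) 1, t * ker σ (α-1) (β-1) (-γ) s t)
        = ∫ t in Set.Ioo (0:ℝ) 1, ker σ α (β-1) (-γ) s t :=
      (MeasureTheory.setIntegral_congr_fun measurableSet_Ioo
        (fun t ht => pt1 t ht)).symm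
    rw [ICeq, IDeq, IM1eq] at hcorr
    -- integration by parts identities
    have hibp1 := ker_ibp (σ := σ) (β := β) (γ := γ) (c := α) (s := s) hσ0 hσ1 hβ hγ hα hs
    have hibp2 := ker_ibp (σ := σ) (β := β) (γ := γ) (c := α+1) (s := s) hσ0 hσ1 hβ hγ
      (by linarith) hs
    rw [show α + 1 - 1 = α by ring] at hibp2
    -- abbreviations
    set M0 : ℝ := ∫ t in Set.Ioo (0:ℝ) 1, ker σ (α-1) (β-1) (-γ) s t with hM0def
    set M1 : ℝ := ∫ t in Set.Ioo (0:ℝ) 1, ker σ α (β-1) (-γ) s t with hM1def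
    set M2 : ℝ := ∫ t in Set.Ioo (0:ℝ) 1, ker σ (α+1) (β-1) (-γ) s t with hM2def
    set A1 : ℝ := ∫ t in Set.Ioo (0:ℝ) 1, ker σ α (β-2) (-γ) s t with hA1def
    set B1 : ℝ := ∫ t in Set.Ioo (0:ℝ) 1, ker σ α (β-1) (-γ-1) s t with hB1def
    set A2 : ℝ := ∫ t in Set.Ioo (0:ℝ) 1, ker σ (α+1) (β-2) (-γ) s t with hA2def
    set B2 : ℝ := ∫ t in Set.Ioo (0:ℝ) 1, ker σ (α+1) (β-1) (-γ-1) s t with hB2def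
    have hM0pos : 0 < M0 := ker_integral_pos hσ0 hσ1 hp0 hq0 hs.le
    have hM1p : 0 < M1 := hM1pos s hs
    have hM2p : 0 < M2 := hM2pos s hs
    have keyineq : 2 * (s * M2) * M0 - (s * M1) * M1 ≤ (α + 2) * (M0 * M1) := by
      nlinarith [hcorr, hibp1, hibp2, mul_le_mul_of_nonneg_right hibp1.le hM1p.le,
        mul_le_mul_of_nonneg_right hibp2.le hM0pos.le]
    have hGs : G s = M0 := hG s
    rw [hderivG s hs, hderiv2G s hs, hGs]
    have hM0ne : M0 ≠ 0 := hM0pos.ne'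
    have hM1ne : M1 ≠ 0 := hM1p.ne'
    have frac : -M1 / M0 - 2 * M2 / -M1 = (2 * M2 * M0 - M1 * M1) / (M0 * M1) := by
      rw [eq_div_iff (mul_ne_zero hM0ne hM1ne), div_neg, neg_div]
      field_simp
      ring
    rw [frac, mul_div_assoc' s _ _, div_le_iff₀ (mul_pos hM0pos hM1p)]
    linarith [keyineq]
  refine ⟨?_, ?_, fun s hs => key s hs, ?_⟩
  · intro s hs
    refine ⟨(hder1 s hs).differentiableAt, ?_⟩
    have hev : deriv G =ᶠ[nhds s]
        fun x => -(∫ t in Set.Ioo (0:ℝ) 1, ker σ α (β-1) (-γ) x t) := by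
      filter_upwards [Ioi_mem_nhds hs] with x hx using hderivG x hx
    rw [hev.differentiableAt_iff]
    exact (hder2 s hs).neg.differentiableAt
  · intro s hs
    refine ⟨hGpos s hs, ?_⟩
    rw [hderivG s hs]
    exact neg_lt_zero.mpr (hM1pos s hs)
  · intro k hk s hs
    rw [le_div_iff₀ hs]
    linarith [key s hs]
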